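/- Let Q0 = [0,1]^{n+m}, X a metric space, and f : Q0 → X Lipschitz. Then the (n,m)-mapping content is countably subadditive on subsets of Q0: for any countable collection {A_i}_{i=1}^∞ of subsets of Q0, H^{n,m}_∞(f, ∪_i A_i) ≤ Σ_{i=1}^∞ H^{n,m}_∞(f, A_i). -/

import Mathlib

open Metric Set MeasureTheory ENNReal

noncomputable section

/-- The `k`-dimensional Hausdorff content of a set in a metric space, defined via
countable covers by closed balls. -/
def hContent {X : Type*} [MetricSpace X] (k : ℕ) (S : Set X) : ℝ≥0∞ :=
  ⨅ (B : ℕ → Set X) (_ : S ⊆ ⋃ i, B i) (_ : ∀ i, ∃ x r, B i = Metric.closedBall x r),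
    ∑' i, EMetric.diam (B i) ^ k

/-- The `k`-dimensional Hausdorff measure of a set in a metric space, defined via
countable covers by closed balls of diameter at most `δ`, letting `δ → 0`. -/
def hMeasure {X : Type*} [MetricSpace X] (k : ℕ) (S : Set X) : ℝ≥0∞ :=
  ⨆ (δ : ℝ≥0∞) (_ : 0 < δ),
    ⨅ (B : ℕ → Set X) (_ : S ⊆ ⋃ i, B i)
      (_ : ∀ i, (∃ x r, B i = Metric.closedBall x r) ∧ EMetric.diam (B i) ≤ δ),
      ∑' i, EMetric.diam (B i) ^ k

/-- The closed unit cube `[0,1]^d` in `ℝ^d`. -/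
def unitCube (d : ℕ) : Set (EuclideanSpace ℝ (Fin d)) :=
  {p | ∀ i, p i ∈ Set.Icc (0 : ℝ) 1}

/-- A dyadic subcube of `[0,1]^d`: it has side length `2⁻ᵏ` and lower-left corner `z/2ᵏ`. -/
structure DyadicCube (d : ℕ) : Type where
  k : ℕ
  z : Fin d → ℕ
  hz : ∀ i, z i + 1 ≤ 2 ^ k

namespace DyadicCube

/-- The side length of a dyadic cube. -/
def side {d : ℕ} (Q : DyadicCube d) : ℝ := (2 : ℝ)⁻¹ ^ Q.k

/-- The center of a dyadic cube. -/
def center {d : ℕ} (Q : DyadicCube d) (i : Fin d) : ℝ :=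
  ((Q.z i : ℝ) + 1 / 2) * (2 : ℝ)⁻¹ ^ Q.k

/-- The dyadic cube as a (closed) subset of `ℝ^d`. -/
def toSet {d : ℕ} (Q : DyadicCube d) : Set (EuclideanSpace ℝ (Fin d)) :=
  {p | ∀ i, |p i - Q.center i| ≤ Q.side / 2}

/-- `Q.scaled λ` is the cube `λQ`, with the same center as `Q` and `λ` times the side length. -/
def scaled {d : ℕ} (Q : DyadicCube d) (lam : ℝ) : Set (EuclideanSpace ℝ (Fin d)) :=
  {p | ∀ i, |p i - Q.center i| ≤ lam * Q.side / 2}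

end DyadicCube

/-- The `(n,m)`-mapping content `H^{n,m}_∞(f, A)`: the infimum of
`∑ H^n_∞(f(Q_i)) side(Q_i)^m` over countable covers of `A` by dyadic cubes of `[0,1]^{n+m}`
with pairwise disjoint interiors. -/
def mContent (n m : ℕ) {X : Type*} [MetricSpace X]
    (f : EuclideanSpace ℝ (Fin (n + m)) → X)
    (A : Set (EuclideanSpace ℝ (Fin (n + m)))) : ℝ≥0∞ :=
  ⨅ (S : Set (DyadicCube (n + m))) (_ : A ⊆ ⋃ Q ∈ S, Q.toSet)
    (_ : S.Pairwise fun Q Q' => interior Q.toSet ∩ interior Q'.toSet = ∅),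
    ∑' Q : S, hContent n (f '' Q.1.toSet) * ENNReal.ofReal (Q.1.side ^ m)

/-- The alternative `(n,m)`-mapping content `Ĥ^{n,m}_∞(f, A)`: the infimum of
`∑ H^n_∞(f(S_i)) diam(S_i)^m` over countable covers of `A` by arbitrary subsets of
`[0,1]^{n+m}`. -/
def altMContent (n m : ℕ) {X : Type*} [MetricSpace X]
    (f : EuclideanSpace ℝ (Fin (n + m)) → X)
    (A : Set (EuclideanSpace ℝ (Fin (n + m)))) : ℝ≥0∞ :=
  ⨅ (S : ℕ → Set (EuclideanSpace ℝ (Fin (n + m)))) (_ : A ⊆ ⋃ i, S i)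
    (_ : ∀ i, S i ⊆ unitCube (n + m)),
    ∑' i, hContent n (f '' S i) * EMetric.diam (S i) ^ m

/-- The first `n` coordinates of a point of `ℝ^{n+m} = ℝ^n × ℝ^m`. -/
def xpart (n m : ℕ) (p : EuclideanSpace ℝ (Fin (n + m))) : EuclideanSpace ℝ (Fin n) :=
  WithLp.toLp 2 (fun i => p (Fin.castAdd m i))

/-- The last `m` coordinates of a point of `ℝ^{n+m} = ℝ^n × ℝ^m`. -/
def ypart (n m : ℕ) (p : EuclideanSpace ℝ (Fin (n + m))) : EuclideanSpace ℝ (Fin m) :=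
  WithLp.toLp 2 (fun j => p (Fin.natAdd n j))

/-- The point `(x, y) ∈ ℝ^{n+m}` built from `x ∈ ℝ^n`, `y ∈ ℝ^m`. -/
def pairup (n m : ℕ) (x : EuclideanSpace ℝ (Fin n)) (y : EuclideanSpace ℝ (Fin m)) :
    EuclideanSpace ℝ (Fin (n + m)) :=
  WithLp.toLp 2 (fun i : Fin (n + m) => (Fin.addCases (fun i₁ => x i₁) (fun j => y j) i : ℝ))

/-- The horizontal slice `E_y = E ∩ (ℝ^n × {y})`. -/
def cubeSlice (n m : ℕ) (E : Set (EuclideanSpace ℝ (Fin (n + m))))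
    (y : EuclideanSpace ℝ (Fin m)) : Set (EuclideanSpace ℝ (Fin (n + m))) :=
  {p ∈ E | ypart n m p = y}

/-- `f` is `C`-bi-Lipschitz on `s`. -/
def BiLipschitzOnWith {α β : Type*} [PseudoMetricSpace α] [PseudoMetricSpace β]
    (C : ℝ) (f : α → β) (s : Set α) : Prop :=
  ∀ x ∈ s, ∀ y ∈ s, C⁻¹ * dist x y ≤ dist (f x) (f y) ∧ dist (f x) (f y) ≤ C * dist x y

/-- `(E, g)` is a Hard Sard pair for `f` with constant `C`:
(i) `g` is a globally `C`-bi-Lipschitz homeomorphism of `ℝ^{n+m}` (in particular it restricts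
to a bi-Lipschitz map on `E`);
(ii) writing `F = f ∘ g⁻¹`, for `(x,y), (x',y') ∈ g(E)` one has `F(x,y) = F(x',y')` iff `x = x'`;
(iii) the map `(x,y) ↦ (F(x,y), y)` is `C`-bi-Lipschitz on `g(E)`, where `X × ℝ^m` carries the
max metric.  Conditions (ii) and (iii) are expressed at points `p = g⁻¹(x,y)`, `q = g⁻¹(x',y')`
of `E`. -/
def IsHardSardPairWith (n m : ℕ) {X : Type*} [MetricSpace X]
    (f : EuclideanSpace ℝ (Fin (n + m)) → X)
    (E : Set (EuclideanSpace ℝ (Fin (n + m))))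
    (g : EuclideanSpace ℝ (Fin (n + m)) → EuclideanSpace ℝ (Fin (n + m)))
    (C : ℝ) : Prop :=
  Function.Surjective g ∧
  BiLipschitzOnWith C g Set.univ ∧
  (∀ p ∈ E, ∀ q ∈ E, (f p = f q ↔ xpart n m (g p) = xpart n m (g q))) ∧
  (∀ p ∈ E, ∀ q ∈ E,
    C⁻¹ * dist (g p) (g q) ≤ dist (f p, ypart n m (g p)) (f q, ypart n m (g q)) ∧
    dist (f p, ypart n m (g p)) (f q, ypart n m (g q)) ≤ C * dist (g p) (g q))

/-- `E` is a Hard Sard set for `f` with constant `C`. -/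
def IsHardSardSetWith (n m : ℕ) {X : Type*} [MetricSpace X]
    (f : EuclideanSpace ℝ (Fin (n + m)) → X)
    (E : Set (EuclideanSpace ℝ (Fin (n + m)))) (C : ℝ) : Prop :=
  ∃ g, IsHardSardPairWith n m f E g C

/-- `sup_{x,y ∈ s} | d(f(x), f(y)) - N(x - y) |`. -/
def mdSup {d : ℕ} {X : Type*} [MetricSpace X] (f : EuclideanSpace ℝ (Fin d) → X)
    (s : Set (EuclideanSpace ℝ (Fin d))) (N : Seminorm ℝ (EuclideanSpace ℝ (Fin d))) : ℝ :=
  ⨆ x : s, ⨆ y : s, |dist (f x.1) (f y.1) - N (x.1 - y.1)|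

/-- `md_f` on a set `s` (a cube of side length `side`):
`side⁻¹ · inf_N sup_{x,y ∈ s} | d(f(x), f(y)) - N(x-y) |`, the infimum being over all
seminorms `N` on `ℝ^d`. -/
def mdf {d : ℕ} {X : Type*} [MetricSpace X] (f : EuclideanSpace ℝ (Fin d) → X)
    (s : Set (EuclideanSpace ℝ (Fin d))) (side : ℝ) : ℝ :=
  side⁻¹ * ⨅ N : Seminorm ℝ (EuclideanSpace ℝ (Fin d)), mdSup f s N

/-- The coordinate plane spanned by the standard basis vectors `e_i`, `i ∈ s`. -/
def coordPlane {d : ℕ} (s : Finset (Fin d)) : Submodule ℝ (EuclideanSpace ℝ (Fin d)) :=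
  Submodule.span ℝ {v | ∃ i ∈ s, v = EuclideanSpace.single i (1 : ℝ)}


/-! ### Auxiliary lemmas for countable subadditivity -/

section Aux

private lemma aux_abs_iff {p z s : ℝ} (hs : 0 < s) :
    |p - (z + 1 / 2) * s| ≤ s / 2 ↔ z * s ≤ p ∧ p ≤ (z + 1) * s := by
  rw [abs_le]
  constructor <;> intro h <;> constructor <;> nlinarith [h.1, h.2]

namespace DyadicCube

lemma side_pos' {d : ℕ} (Q : DyadicCube d) : 0 < Q.side := pow_pos (by norm_num) _

lemma mem_toSet_iff {d : ℕ} (Q : DyadicCube d) (p : EuclideanSpace ℝ (Fin d)) :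
    p ∈ Q.toSet ↔ ∀ i, (Q.z i : ℝ) * Q.side ≤ p i ∧ p i ≤ ((Q.z i : ℝ) + 1) * Q.side := by
  unfold toSet
  simp only [Set.mem_setOf_eq]
  exact forall_congr' fun i => aux_abs_iff Q.side_pos'

lemma interior_mem {d : ℕ} {Q : DyadicCube d} {p : EuclideanSpace ℝ (Fin d)}
    (hp : p ∈ interior Q.toSet) (i : Fin d) :
    (Q.z i : ℝ) * Q.side < p i ∧ p i < ((Q.z i : ℝ) + 1) * Q.side := by
  obtain ⟨ε, hε, hball⟩ := Metric.mem_nhds_iff.mp (mem_interior_iff_mem_nhds.mp hp)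
  have hnorm : ∀ c : ℝ, dist (p + c • EuclideanSpace.single i (1 : ℝ)) p = |c| := by
    intro c
    rw [dist_eq_norm, add_sub_cancel_left, norm_smul, EuclideanSpace.norm_single]
    simp
  have happ : ∀ c : ℝ, (p + c • EuclideanSpace.single i (1 : ℝ)) i = p i + c := by
    intro c
    simp [EuclideanSpace.single_apply]
  have h1 : p + (ε / 2) • EuclideanSpace.single i (1 : ℝ) ∈ Q.toSet := by
    apply hball
    rw [Metric.mem_ball, hnorm, abs_of_pos (by linarith)]
    linarith
  have h2 : p + (-(ε / 2)) • EuclideanSpace.single i (1 : ℝ) ∈ Q.toSet := by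
    apply hball
    rw [Metric.mem_ball, hnorm, abs_of_neg (by linarith)]
    linarith
  rw [mem_toSet_iff] at h1 h2
  have e1 := (h1 i).2
  have e2 := (h2 i).1
  rw [happ] at e1 e2
  constructor <;> linarith

/-- Two dyadic cubes with intersecting interiors are nested (smaller side in larger). -/
lemma subset_of_k_le_of_inter {d : ℕ} {Q Q' : DyadicCube d} (hk : Q'.k ≤ Q.k)
    (hne : (interior Q.toSet ∩ interior Q'.toSet).Nonempty) : Q.toSet ⊆ Q'.toSet := by
  obtain ⟨p, hp, hp'⟩ := hne
  set t := Q.k - Q'.k with ht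
  have hkk : Q.k = Q'.k + t := by omega
  have hcan : (2 : ℝ)⁻¹ ^ t * 2 ^ t = 1 := by
    rw [← mul_pow]; norm_num
  have hs : Q'.side = Q.side * 2 ^ t := by
    show (2 : ℝ)⁻¹ ^ Q'.k = (2 : ℝ)⁻¹ ^ Q.k * 2 ^ t
    rw [hkk, pow_add, mul_assoc, hcan, mul_one]
  have hspos := Q.side_pos'
  intro q hq
  rw [mem_toSet_iff] at hq ⊢
  intro i
  have h1 := interior_mem hp i
  have h2 := interior_mem hp' i
  -- real inequalities between corners
  have hr1 : (Q'.z i : ℝ) * 2 ^ t < (Q.z i : ℝ) + 1 := by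
    have := lt_trans h2.1 h1.2
    rw [hs] at this
    nlinarith
  have hr2 : (Q.z i : ℝ) < ((Q'.z i : ℝ) + 1) * 2 ^ t := by
    have := lt_trans h1.1 h2.2
    rw [hs] at this
    nlinarith
  -- nat versions
  have hn1 : Q'.z i * 2 ^ t ≤ Q.z i := by
    have : (Q'.z i * 2 ^ t : ℕ) < Q.z i + 1 := by exact_mod_cast (by push_cast; linarith : ((Q'.z i * 2 ^ t : ℕ) : ℝ) < ((Q.z i + 1 : ℕ) : ℝ))
    omega
  have hn2 : Q.z i + 1 ≤ (Q'.z i + 1) * 2 ^ t := by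
    have : (Q.z i : ℕ) < (Q'.z i + 1) * 2 ^ t := by exact_mod_cast (by push_cast; linarith : ((Q.z i : ℕ) : ℝ) < (((Q'.z i + 1) * 2 ^ t : ℕ) : ℝ))
    omega
  have hc1 : ((Q'.z i * 2 ^ t : ℕ) : ℝ) ≤ ((Q.z i : ℕ) : ℝ) := by exact_mod_cast hn1
  have hc2 : ((Q.z i + 1 : ℕ) : ℝ) ≤ (((Q'.z i + 1) * 2 ^ t : ℕ) : ℝ) := by exact_mod_cast hn2
  push_cast at hc1 hc2
  have hq1 := (hq i).1
  have hq2 := (hq i).2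
  constructor
  · rw [hs]; nlinarith
  · rw [hs]; nlinarith

lemma k_le_of_subset {d : ℕ} (hd : 0 < d) {Q Q' : DyadicCube d} (h : Q.toSet ⊆ Q'.toSet) :
    Q'.k ≤ Q.k := by
  have hspos := Q.side_pos'
  have hspos' := Q'.side_pos'
  set i : Fin d := ⟨0, hd⟩
  have hL : (WithLp.toLp 2 (fun j => (Q.z j : ℝ) * Q.side) : EuclideanSpace ℝ (Fin d)) ∈ Q.toSet := by
    rw [mem_toSet_iff]; intro j; constructor
    · exact le_refl _
    · change (Q.z j : ℝ) * Q.side ≤ ((Q.z j : ℝ) + 1) * Q.side; nlinarith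
  have hH : (WithLp.toLp 2 (fun j => ((Q.z j : ℝ) + 1) * Q.side) : EuclideanSpace ℝ (Fin d)) ∈ Q.toSet := by
    rw [mem_toSet_iff]; intro j; constructor
    · change (Q.z j : ℝ) * Q.side ≤ ((Q.z j : ℝ) + 1) * Q.side; nlinarith
    · exact le_refl _
  have hL2 : (Q'.z i : ℝ) * Q'.side ≤ (Q.z i : ℝ) * Q.side ∧
      (Q.z i : ℝ) * Q.side ≤ ((Q'.z i : ℝ) + 1) * Q'.side := (Q'.mem_toSet_iff _).mp (h hL) i
  have hH2 : (Q'.z i : ℝ) * Q'.side ≤ ((Q.z i : ℝ) + 1) * Q.side ∧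
      ((Q.z i : ℝ) + 1) * Q.side ≤ ((Q'.z i : ℝ) + 1) * Q'.side := (Q'.mem_toSet_iff _).mp (h hH) i
  have hside : Q.side ≤ Q'.side := by
    have := hL2.1
    have := hH2.2
    nlinarith
  by_contra hlt
  push_neg at hlt
  have : Q'.side < Q.side := by
    exact pow_lt_pow_iff_right_of_lt_one₀ (by norm_num) (by norm_num) |>.mpr hlt
  linarith

lemma eq_of_subset_of_k_eq {d : ℕ} {Q Q' : DyadicCube d} (h : Q.toSet ⊆ Q'.toSet)
    (hk : Q'.k = Q.k) : Q = Q' := by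
  have hspos := Q.side_pos'
  have hside : Q'.side = Q.side := by unfold DyadicCube.side; rw [hk]
  have hz : ∀ i, Q.z i = Q'.z i := by
    intro i
    have hL : (WithLp.toLp 2 (fun j => (Q.z j : ℝ) * Q.side) : EuclideanSpace ℝ (Fin d)) ∈ Q.toSet := by
      rw [mem_toSet_iff]; intro j; constructor
      · exact le_refl _
      · change (Q.z j : ℝ) * Q.side ≤ ((Q.z j : ℝ) + 1) * Q.side; nlinarith
    have hH : (WithLp.toLp 2 (fun j => ((Q.z j : ℝ) + 1) * Q.side) : EuclideanSpace ℝ (Fin d)) ∈ Q.toSet := by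
      rw [mem_toSet_iff]; intro j; constructor
      · change (Q.z j : ℝ) * Q.side ≤ ((Q.z j : ℝ) + 1) * Q.side; nlinarith
      · exact le_refl _
    have hL2 : (Q'.z i : ℝ) * Q'.side ≤ (Q.z i : ℝ) * Q.side ∧
        (Q.z i : ℝ) * Q.side ≤ ((Q'.z i : ℝ) + 1) * Q'.side := (Q'.mem_toSet_iff _).mp (h hL) i
    have hH2 : (Q'.z i : ℝ) * Q'.side ≤ ((Q.z i : ℝ) + 1) * Q.side ∧
        ((Q.z i : ℝ) + 1) * Q.side ≤ ((Q'.z i : ℝ) + 1) * Q'.side := (Q'.mem_toSet_iff _).mp (h hH) i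
    rw [hside] at hL2 hH2
    have h1 : (Q'.z i : ℝ) ≤ Q.z i := by nlinarith [hL2.1]
    have h2 : (Q.z i : ℝ) ≤ Q'.z i := by nlinarith [hH2.2]
    exact_mod_cast le_antisymm h2 h1
  obtain ⟨k1, z1, hz1⟩ := Q
  obtain ⟨k2, z2, hz2⟩ := Q'
  simp only [mk.injEq]
  exact ⟨hk.symm, funext hz⟩

end DyadicCube

private lemma mContent_le_of_cover {n m : ℕ} {X : Type*} [MetricSpace X]
    (f : EuclideanSpace ℝ (Fin (n + m)) → X) (A : Set (EuclideanSpace ℝ (Fin (n + m))))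
    (S : Set (DyadicCube (n + m))) (hcov : A ⊆ ⋃ Q ∈ S, Q.toSet)
    (hpair : S.Pairwise fun Q Q' => interior Q.toSet ∩ interior Q'.toSet = ∅) :
    mContent n m f A ≤ ∑' Q : S, hContent n (f '' Q.1.toSet) * ENNReal.ofReal (Q.1.side ^ m) :=
  iInf_le_of_le S (iInf_le_of_le hcov (iInf_le _ hpair))

private lemma hContent_zero_eq_top {X : Type*} [MetricSpace X] (S : Set X) :
    hContent 0 S = ⊤ := by
  refine top_unique (le_iInf fun B => le_iInf fun _ => le_iInf fun _ => ?_)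
  have h : ∀ i : ℕ, EMetric.diam (B i) ^ (0 : ℕ) = 1 := fun i => pow_zero _
  rw [tsum_congr h]
  rw [ENNReal.tsum_const_eq_top_of_ne_zero one_ne_zero]

end Aux


set_option maxHeartbeats 1000000 in
/-- **Lemma (countable subadditivity).**  If `f : [0,1]^{n+m} → X` is Lipschitz, the mapping
content is countably subadditive on subsets of the unit cube. -/
theorem mContent_countably_subadditive (n m : ℕ) (X : Type*) [MetricSpace X]
    (f : EuclideanSpace ℝ (Fin (n + m)) → X)
    (hf : ∃ K : NNReal, LipschitzOnWith K f (unitCube (n + m)))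
    (A : ℕ → Set (EuclideanSpace ℝ (Fin (n + m))))
    (hA : ∀ i, A i ⊆ unitCube (n + m)) :
    mContent n m f (⋃ i, A i) ≤ ∑' i, mContent n m f (A i) := by
  classical
  rcases Nat.eq_zero_or_pos (n + m) with hd | hd
  · -- degenerate case n + m = 0
    obtain ⟨rfl, rfl⟩ : n = 0 ∧ m = 0 := by omega
    rcases Set.eq_empty_or_nonempty (⋃ i, A i) with hU | hU
    · rw [hU]
      refine le_trans (mContent_le_of_cover f ∅ ∅ (Set.empty_subset _) (Set.pairwise_empty _)) ?_
      rw [tsum_empty]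
      exact zero_le
    · obtain ⟨x, hx⟩ := hU
      rw [Set.mem_iUnion] at hx
      obtain ⟨i₀, hx⟩ := hx
      have htop : mContent 0 0 f (A i₀) = ⊤ := by
        refine top_unique (le_iInf fun S => le_iInf fun hcov => le_iInf fun _ => ?_)
        obtain ⟨Q, hQ, -⟩ := Set.mem_iUnion₂.mp (hcov hx)
        calc (⊤ : ℝ≥0∞) = hContent 0 (f '' Q.toSet) * ENNReal.ofReal (Q.side ^ 0) := by
              rw [hContent_zero_eq_top, pow_zero, ENNReal.ofReal_one, mul_one]
          _ ≤ _ := ENNReal.le_tsum (⟨Q, hQ⟩ : S)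
      have hT : (⊤ : ℝ≥0∞) ≤ ∑' i, mContent 0 0 f (A i) := htop ▸ ENNReal.le_tsum i₀
      exact le_trans le_top hT
  · -- main case n + m > 0
    apply ENNReal.le_of_forall_pos_le_add
    intro ε hε hb
    obtain ⟨δ, hδpos, hδsum⟩ :=
      ENNReal.exists_pos_sum_of_countable (by exact_mod_cast hε.ne' : (ε : ℝ≥0∞) ≠ 0) ℕ
    have hfin : ∀ i, mContent n m f (A i) ≠ ⊤ :=
      fun i => (lt_of_le_of_lt (ENNReal.le_tsum i) hb).ne
    have key : ∀ i, ∃ S : Set (DyadicCube (n + m)),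
        (A i ⊆ ⋃ Q ∈ S, Q.toSet) ∧
        (S.Pairwise fun Q Q' => interior Q.toSet ∩ interior Q'.toSet = ∅) ∧
        ∑' Q : S, hContent n (f '' Q.1.toSet) * ENNReal.ofReal (Q.1.side ^ m)
          ≤ mContent n m f (A i) + δ i := by
      intro i
      have hlt : mContent n m f (A i) < mContent n m f (A i) + δ i :=
        ENNReal.lt_add_right (hfin i) (by exact_mod_cast (hδpos i).ne')
      nth_rewrite 1 [mContent] at hlt
      simp only [iInf_lt_iff] at hlt
      obtain ⟨S, h1, h2, h3⟩ := hlt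
      exact ⟨S, h1, h2, h3.le⟩
    choose Sc hcov hpair hsum using key
    have hmax : ∀ Q ∈ ⋃ i, Sc i, ∃ Qm,
        (Qm ∈ ⋃ i, Sc i ∧ ∀ Q' ∈ ⋃ i, Sc i, Qm.toSet ⊆ Q'.toSet → Q' = Qm) ∧
        Q.toSet ⊆ Qm.toSet := by
      intro Q hQ
      have hne : ∃ k, ∃ Q' ∈ ⋃ i, Sc i, Q.toSet ⊆ Q'.toSet ∧ Q'.k = k :=
        ⟨Q.k, Q, hQ, subset_rfl, rfl⟩
      obtain ⟨Qm, hQm, hsub, hkm⟩ := Nat.find_spec hne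
      refine ⟨Qm, ⟨hQm, ?_⟩, hsub⟩
      intro Q' hQ' hsub'
      have h2 : Nat.find hne ≤ Q'.k := Nat.find_le ⟨Q', hQ', hsub.trans hsub', rfl⟩
      have h3 : Q'.k ≤ Qm.k := DyadicCube.k_le_of_subset hd hsub'
      exact (DyadicCube.eq_of_subset_of_k_eq hsub' (by omega)).symm
    set M : Set (DyadicCube (n + m)) :=
      {Q | Q ∈ ⋃ i, Sc i ∧ ∀ Q' ∈ ⋃ i, Sc i, Q.toSet ⊆ Q'.toSet → Q' = Q} with hM
    have hMsub : M ⊆ ⋃ i, Sc i := fun Q hQ => hQ.1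
    have hMpair : M.Pairwise fun Q Q' => interior Q.toSet ∩ interior Q'.toSet = ∅ := by
      intro Q hQ Q' hQ' hne
      by_contra hcon
      rw [← Ne, ← Set.nonempty_iff_ne_empty] at hcon
      rcases le_total Q'.k Q.k with hk | hk
      · exact hne ((hQ.2 Q' hQ'.1 (DyadicCube.subset_of_k_le_of_inter hk hcon)).symm)
      · exact hne (hQ'.2 Q hQ.1 (DyadicCube.subset_of_k_le_of_inter hk
          (by rwa [Set.inter_comm] at hcon)))
    have hMcov : (⋃ i, A i) ⊆ ⋃ Q ∈ M, Q.toSet := by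
      intro x hx
      rw [Set.mem_iUnion] at hx
      obtain ⟨i, hx⟩ := hx
      obtain ⟨Q, hQ, hxQ⟩ := Set.mem_iUnion₂.mp (hcov i hx)
      obtain ⟨Qm, hQm, hsub⟩ := hmax Q (Set.mem_iUnion.mpr ⟨i, hQ⟩)
      exact Set.mem_iUnion₂.mpr ⟨Qm, hQm, hsub hxQ⟩
    calc mContent n m f (⋃ i, A i)
        ≤ ∑' Q : M, hContent n (f '' Q.1.toSet) * ENNReal.ofReal (Q.1.side ^ m) :=
          mContent_le_of_cover f _ M hMcov hMpair
      _ ≤ ∑' Q : (⋃ i, Sc i),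
            hContent n (f '' Q.1.toSet) * ENNReal.ofReal (Q.1.side ^ m) :=
          ENNReal.tsum_mono_subtype
            (fun Q : DyadicCube (n + m) =>
              hContent n (f '' Q.toSet) * ENNReal.ofReal (Q.side ^ m)) hMsub
      _ ≤ ∑' i, ∑' Q : Sc i,
            hContent n (f '' Q.1.toSet) * ENNReal.ofReal (Q.1.side ^ m) :=
          ENNReal.tsum_iUnion_le_tsum
            (fun Q : DyadicCube (n + m) =>
              hContent n (f '' Q.toSet) * ENNReal.ofReal (Q.side ^ m)) Sc
      _ ≤ ∑' i, (mContent n m f (A i) + δ i) := ENNReal.tsum_le_tsum hsum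
      _ = (∑' i, mContent n m f (A i)) + ∑' i, (δ i : ℝ≥0∞) := ENNReal.tsum_add
      _ ≤ (∑' i, mContent n m f (A i)) + ε := add_le_add (le_refl _) hδsum.le

end
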